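/- Let N ≥ 1 and let A and B be N×N complex Hermitian matrices with A positive semidefinite and B positive definite. Let λ₁(A) ≥ λ₂(A) ≥ … ≥ λ_N(A) and λ₁(B) ≥ λ₂(B) ≥ … ≥ λ_N(B) denote their eigenvalues listed in decreasing order. Then ∏_{i=1}^N (1 + λ_i(A)/λ_i(B)) ≤ det(I + A·B⁻¹), where det(I + A·B⁻¹) = det(B + A)/det(B) is a positive real number. -/

import Mathlib

open Matrix BigOperators ComplexOrder Finset

/-- Majorization implies product inequality (via log concavity + Abel summation). -/
lemma maj_prod_le (n : ℕ) (u v : ℕ → ℝ)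
    (hu : ∀ i < n, 0 < u i) (hv : ∀ i < n, 0 < v i)
    (humono : ∀ i j, i ≤ j → j < n → u j ≤ u i)
    (hps : ∀ k ≤ n, ∑ i ∈ range k, u i ≤ ∑ i ∈ range k, v i)
    (htot : ∑ i ∈ range n, u i = ∑ i ∈ range n, v i) :
    ∏ i ∈ range n, v i ≤ ∏ i ∈ range n, u i := by
  have key : ∑ i ∈ range n, (u i)⁻¹ • (v i - u i) ≤ 0 := by
    rw [Finset.sum_range_by_parts]
    have h1 : ∑ i ∈ range n, (v i - u i) = 0 := by
      rw [Finset.sum_sub_distrib, htot, sub_self]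
    rw [h1, smul_zero, zero_sub, neg_nonpos]
    apply Finset.sum_nonneg
    intro i hi
    rw [Finset.mem_range] at hi
    have hi1 : i + 1 < n := by omega
    have h2 : (u i)⁻¹ ≤ (u (i + 1))⁻¹ := by
      apply one_div_le_one_div_of_le (hu _ hi1) (humono i (i+1) (by omega) hi1) |>.trans_eq (by rw [one_div]) |>.trans_eq' (by rw [one_div])
    have h3 : (0:ℝ) ≤ ∑ j ∈ range (i+1), (v j - u j) := by
      rw [Finset.sum_sub_distrib, sub_nonneg]
      exact hps (i+1) (by omega)
    have := mul_nonneg (sub_nonneg.2 h2) h3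
    simpa [smul_eq_mul] using this
  have hlog : ∑ i ∈ range n, Real.log (v i) ≤ ∑ i ∈ range n, Real.log (u i) := by
    rw [← sub_nonpos, ← Finset.sum_sub_distrib]
    refine le_trans (Finset.sum_le_sum (fun i hi => ?_)) key
    rw [Finset.mem_range] at hi
    have hui := hu i hi; have hvi := hv i hi
    have h4 : Real.log (v i) - Real.log (u i) = Real.log (v i / u i) :=
      (Real.log_div hvi.ne' hui.ne').symm
    rw [h4, smul_eq_mul]
    have := Real.log_le_sub_one_of_pos (div_pos hvi hui)
    calc Real.log (v i / u i) ≤ v i / u i - 1 := this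
      _ = (u i)⁻¹ * (v i - u i) := by
        rw [mul_sub, div_eq_inv_mul, mul_comm (u i)⁻¹ (u i), mul_inv_cancel₀ hui.ne']
  calc ∏ i ∈ range n, v i = Real.exp (∑ i ∈ range n, Real.log (v i)) := by
        rw [Real.exp_sum]
        exact (Finset.prod_congr rfl (fun i hi => (Real.exp_log (hv i (Finset.mem_range.1 hi))).symm))
    _ ≤ Real.exp (∑ i ∈ range n, Real.log (u i)) := Real.exp_le_exp.2 hlog
    _ = ∏ i ∈ range n, u i := by
        rw [Real.exp_sum]
        exact (Finset.prod_congr rfl (fun i hi => Real.exp_log (hu i (Finset.mem_range.1 hi))))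

lemma card_filter_lt_fin (n k : ℕ) (hk : k ≤ n) :
    (Finset.univ.filter (fun i : Fin n => (i : ℕ) < k)).card = k := by
  rcases lt_or_eq_of_le hk with h | h
  · have : Finset.univ.filter (fun i : Fin n => (i : ℕ) < k) = Finset.Iio (⟨k, h⟩ : Fin n) := by
      ext i; simp [Fin.lt_def]
    rw [this, Fin.card_Iio]
  · have : Finset.univ.filter (fun i : Fin n => (i : ℕ) < k) = Finset.univ := by
      ext i
      simp only [Finset.mem_filter, Finset.mem_univ, true_and, iff_true]
      exact h ▸ i.isLt
    rw [this, Finset.card_univ, Fintype.card_fin, h]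

/-- Weighted sums with substochastic weights are at most top-k sums. -/
lemma weighted_sum_le (n k : ℕ) (hk : k ≤ n) (c l : Fin n → ℝ)
    (hc0 : ∀ i, 0 ≤ c i) (hc1 : ∀ i, c i ≤ 1) (hcs : ∑ i, c i = (k : ℝ))
    (hl : Antitone l) :
    ∑ i, c i * l i ≤ ∑ i ∈ Finset.univ.filter (fun i : Fin n => (i : ℕ) < k), l i := by
  rcases lt_or_eq_of_le hk with hkn | hkn
  · set t := l ⟨k, hkn⟩ with ht
    have key : ∑ i, c i * (l i - t) ≤
        ∑ i ∈ Finset.univ.filter (fun i : Fin n => (i : ℕ) < k), (l i - t) := by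
      rw [← Finset.sum_filter_add_sum_filter_not Finset.univ (fun i : Fin n => (i:ℕ) < k)
        (fun i => c i * (l i - t))]
      have h1 : ∑ i ∈ Finset.univ.filter (fun i : Fin n => (i:ℕ) < k), c i * (l i - t) ≤
          ∑ i ∈ Finset.univ.filter (fun i : Fin n => (i:ℕ) < k), (l i - t) := by
        apply Finset.sum_le_sum
        intro i hi
        simp only [Finset.mem_filter] at hi
        have hle : (⟨k, hkn⟩ : Fin n) ≥ i := by exact le_of_lt (by exact hi.2)
        have : 0 ≤ l i - t := sub_nonneg.2 (hl (le_of_lt hi.2))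
        nlinarith [hc1 i, hc0 i]
      have h2 : ∑ i ∈ Finset.univ.filter (fun i : Fin n => ¬ (i:ℕ) < k), c i * (l i - t) ≤ 0 := by
        apply Finset.sum_nonpos
        intro i hi
        simp only [Finset.mem_filter, not_lt] at hi
        have : l i - t ≤ 0 := sub_nonpos.2 (hl (by exact hi.2))
        exact mul_nonpos_of_nonneg_of_nonpos (hc0 i) this
      linarith
    have expand : ∑ i, c i * l i = ∑ i, c i * (l i - t) + k * t := by
      rw [← hcs]; rw [Finset.sum_mul, ← Finset.sum_add_distrib]
      congr 1; ext i; ring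
    have expand2 : ∑ i ∈ Finset.univ.filter (fun i : Fin n => (i : ℕ) < k), (l i - t) =
        ∑ i ∈ Finset.univ.filter (fun i : Fin n => (i : ℕ) < k), l i - k * t := by
      rw [Finset.sum_sub_distrib, Finset.sum_const, card_filter_lt_fin n k hk, nsmul_eq_mul]
    rw [expand]
    linarith [key, expand2.le, expand2.ge]
  · have hall : ∀ i, c i = 1 := by
      by_contra h
      push_neg at h
      obtain ⟨i, hi⟩ := h
      have hlt : c i < 1 := lt_of_le_of_ne (hc1 i) hi
      have h2 : ∑ j, c j < ∑ j : Fin n, (1:ℝ) :=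
        Finset.sum_lt_sum (fun j _ => hc1 j) ⟨i, Finset.mem_univ i, hlt⟩
      rw [hcs, Finset.sum_const, Finset.card_univ, Fintype.card_fin, nsmul_eq_mul,
        mul_one, hkn] at h2
      exact lt_irrefl _ h2
    have hfil : Finset.univ.filter (fun i : Fin n => (i : ℕ) < k) = Finset.univ := by
      ext i; simp only [Finset.mem_filter, Finset.mem_univ, true_and, iff_true]
      exact hkn ▸ i.isLt
    rw [hfil]
    exact le_of_eq (Finset.sum_congr rfl (fun i _ => by rw [hall i, one_mul]))

/-- Ky Fan-type bound: sum over a k-set of diagonal entries of `U† M U` is at most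
the sum of the k largest eigenvalues. -/
lemma kyfan {n : ℕ} {M : Matrix (Fin n) (Fin n) ℂ} (hM : M.IsHermitian)
    (U : Matrix.unitaryGroup (Fin n) ℂ) (s : Finset (Fin n))
    (lam : Fin n → ℝ) (hlam : Antitone lam) (e : Equiv.Perm (Fin n))
    (he : lam = hM.eigenvalues ∘ e) :
    ∑ j ∈ s, ((star (U : Matrix (Fin n) (Fin n) ℂ) * M * U) j j).re ≤
      ∑ i ∈ Finset.univ.filter (fun i : Fin n => (i : ℕ) < s.card), lam i := by
  classical
  set V : Matrix (Fin n) (Fin n) ℂ := (hM.eigenvectorUnitary : Matrix (Fin n) (Fin n) ℂ) with hV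
  set Wu : Matrix.unitaryGroup (Fin n) ℂ := star U * hM.eigenvectorUnitary with hWu
  set W : Matrix (Fin n) (Fin n) ℂ := (Wu : Matrix (Fin n) (Fin n) ℂ) with hW
  set g := hM.eigenvalues with hg
  have hdecomp : star (U : Matrix (Fin n) (Fin n) ℂ) * M * U
      = W * Matrix.diagonal (Complex.ofReal ∘ g) * star W := by
    conv_lhs => rw [hM.spectral_theorem]
    have hsW : star W = star V * (U : Matrix (Fin n) (Fin n) ℂ) := by
      simp [hW, hWu, hV, StarMul.star_mul, MulMemClass.coe_mul, Unitary.coe_star]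
    rw [hsW]
    simp only [hW, hWu, MulMemClass.coe_mul, Unitary.coe_star, hV]
    simp [Matrix.mul_assoc]
    rfl
  -- diagonal entries
  have hentry : ∀ j, ((star (U : Matrix (Fin n) (Fin n) ℂ) * M * U) j j).re
      = ∑ i, Complex.normSq (W j i) * g i := by
    intro j
    rw [hdecomp]
    rw [Matrix.mul_apply]
    rw [Complex.re_sum]
    apply Finset.sum_congr rfl
    intro i _
    rw [Matrix.mul_diagonal, Matrix.star_apply]
    have hz : W j i * ((Complex.ofReal ∘ g) i) * star (W j i)
        = Complex.ofReal (Complex.normSq (W j i) * g i) := by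
      simp only [Function.comp_apply, Complex.star_def]
      rw [mul_comm (W j i), mul_assoc, Complex.mul_conj]
      push_cast
      ring
    rw [hz, Complex.ofReal_re]
  -- column and row sums of |W|^2
  have hWsW : star W * W = 1 := by
    have := Wu.2
    rw [Matrix.mem_unitaryGroup_iff'] at this
    exact this
  have hWWs : W * star W = 1 := by
    have := Wu.2
    rw [Matrix.mem_unitaryGroup_iff] at this
    exact this
  have hcol : ∀ i, ∑ j, Complex.normSq (W j i) = 1 := by
    intro i
    have h1 : (star W * W) i i = 1 := by rw [hWsW]; simp
    rw [Matrix.mul_apply] at h1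
    have h2 : ∑ j, (star W) i j * W j i = ∑ j, (Complex.normSq (W j i) : ℂ) := by
      apply Finset.sum_congr rfl
      intro j _
      rw [Matrix.star_apply, Complex.star_def, mul_comm, Complex.mul_conj]
    rw [h2] at h1
    have h3 := congrArg Complex.re h1
    rw [Complex.re_sum] at h3
    simpa using h3
  have hrow : ∀ j, ∑ i, Complex.normSq (W j i) = 1 := by
    intro j
    have h1 : (W * star W) j j = 1 := by rw [hWWs]; simp
    rw [Matrix.mul_apply] at h1
    have h2 : ∑ i, W j i * (star W) i j = ∑ i, (Complex.normSq (W j i) : ℂ) := by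
      apply Finset.sum_congr rfl
      intro i _
      rw [Matrix.star_apply, Complex.star_def, Complex.mul_conj]
    rw [h2] at h1
    have h3 := congrArg Complex.re h1
    rw [Complex.re_sum] at h3
    simpa using h3
  set c : Fin n → ℝ := fun i => ∑ j ∈ s, Complex.normSq (W j i) with hc
  have hc0 : ∀ i, 0 ≤ c i := fun i =>
    Finset.sum_nonneg (fun j _ => Complex.normSq_nonneg _)
  have hc1 : ∀ i, c i ≤ 1 := by
    intro i
    calc c i ≤ ∑ j, Complex.normSq (W j i) :=
          Finset.sum_le_sum_of_subset_of_nonneg (Finset.subset_univ s)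
            (fun j _ _ => Complex.normSq_nonneg _)
      _ = 1 := hcol i
  have hcs : ∑ i, c i = (s.card : ℝ) := by
    rw [hc]
    rw [Finset.sum_comm]
    rw [Finset.sum_congr rfl (fun j _ => hrow j)]
    simp
  have hmain : ∑ j ∈ s, ((star (U : Matrix (Fin n) (Fin n) ℂ) * M * U) j j).re
      = ∑ i, c i * g i := by
    rw [Finset.sum_congr rfl (fun j _ => hentry j), Finset.sum_comm]
    apply Finset.sum_congr rfl
    intro i _
    rw [hc, Finset.sum_mul]
  rw [hmain]
  have hre : ∑ i, c i * g i = ∑ i, (c ∘ e) i * lam i := by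
    rw [he]
    exact (Equiv.sum_comp e (fun i => c i * g i)).symm
  rw [hre]
  apply weighted_sum_le n s.card (by
    simpa using Finset.card_le_univ s) (c ∘ e) lam
    (fun i => hc0 _) (fun i => hc1 _) ?_ hlam
  rw [show ∑ i, (c ∘ ⇑e) i = ∑ i, c (e i) from rfl, Equiv.sum_comp e c, hcs]

lemma sum_fin_ext {N : ℕ} (k : ℕ) (hk : k ≤ N) (f : Fin N → ℝ) :
    ∑ i ∈ Finset.range k, (if h : i < N then f ⟨i, h⟩ else 0)
      = ∑ i ∈ Finset.univ.filter (fun i : Fin N => (i : ℕ) < k), f i := by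
  rw [Finset.sum_filter]
  have h1 : ∑ i : Fin N, (if (i : ℕ) < k then f i else 0)
      = ∑ i ∈ Finset.range N,
        (fun i : ℕ => if h : i < N then (if i < k then f ⟨i, h⟩ else 0) else 0) i := by
    rw [← Fin.sum_univ_eq_sum_range]
    apply Finset.sum_congr rfl
    intro i _
    simp [i.isLt]
  rw [h1]
  rw [← Finset.sum_subset (Finset.range_subset_range.2 hk)]
  · apply Finset.sum_congr rfl
    intro i hi
    rw [Finset.mem_range] at hi
    have hiN : i < N := lt_of_lt_of_le hi hk
    simp [hiN, hi]
  · intro i hi hni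
    rw [Finset.mem_range] at hi
    rw [Finset.mem_range, not_lt] at hni
    simp [hi, not_lt.2 hni, (by omega : ¬ i < k)]

lemma prod_fin_ext {N : ℕ} (f : Fin N → ℝ) :
    ∏ i ∈ Finset.range N, (if h : i < N then f ⟨i, h⟩ else 0) = ∏ i, f i := by
  rw [← Fin.prod_univ_eq_prod_range (fun i : ℕ => if h : i < N then f ⟨i, h⟩ else 0) N]
  apply Finset.prod_congr rfl
  intro i _
  simp [i.isLt]

lemma filter_univ_eq {N : ℕ} :
    Finset.univ.filter (fun i : Fin N => (i : ℕ) < N) = Finset.univ := by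
  ext i; simp [i.isLt]

lemma trace_hermitian {n : ℕ} {M : Matrix (Fin n) (Fin n) ℂ} (hM : M.IsHermitian) :
    M.trace = Complex.ofReal (∑ i, hM.eigenvalues i) := by
  conv_lhs => rw [hM.spectral_theorem]
  rw [Unitary.conjStarAlgAut_apply, Matrix.trace_mul_comm, ← Matrix.mul_assoc]
  rw [(Matrix.mem_unitaryGroup_iff').mp hM.eigenvectorUnitary.2, Matrix.one_mul,
    Matrix.trace_diagonal]
  rw [Complex.ofReal_sum]
  rfl

lemma det_hermitian {n : ℕ} {M : Matrix (Fin n) (Fin n) ℂ} (hM : M.IsHermitian) :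
    M.det = Complex.ofReal (∏ i, hM.eigenvalues i) := by
  rw [hM.det_eq_prod_eigenvalues, Complex.ofReal_prod]; norm_cast

open Matrix BigOperators ComplexOrder

/-- Fiedler-type lower bound: for Hermitian `A` positive semidefinite and `B`
positive definite with eigenvalues listed in decreasing order,
`∏ i (1 + λ_i(A)/λ_i(B)) ≤ det (I + A B⁻¹)`, the latter being a real number
equal to `det (B + A) / det B`. -/
theorem fiedler_lower_bound (N : ℕ) (hN : 1 ≤ N)
    (A B : Matrix (Fin N) (Fin N) ℂ)
    (hA : A.PosSemidef) (hB : B.PosDef)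
    (lamA lamB : Fin N → ℝ)
    (hlamA : Antitone lamA) (hlamB : Antitone lamB)
    (hpermA : ∃ e : Equiv.Perm (Fin N), lamA = hA.isHermitian.eigenvalues ∘ e)
    (hpermB : ∃ e : Equiv.Perm (Fin N), lamB = hB.isHermitian.eigenvalues ∘ e) :
    ∏ i, (1 + lamA i / lamB i) ≤ ((1 + A * B⁻¹).det).re ∧
      ((1 + A * B⁻¹).det).im = 0 ∧
      (1 + A * B⁻¹).det = (B + A).det / B.det := by
  classical
  obtain ⟨eA, heA⟩ := hpermA
  obtain ⟨eB, heB⟩ := hpermB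
  have hC : (B + A).PosDef := hB.add_posSemidef hA
  set g : Fin N → ℝ := hC.isHermitian.eigenvalues with hg
  set eC : Equiv.Perm (Fin N) := Fin.revPerm.trans (Tuple.sort g) with heCdef
  set lamC : Fin N → ℝ := g ∘ eC with hlamCdef
  have heC : lamC = g ∘ eC := rfl
  have hlamC : Antitone lamC := by
    intro a b hab
    have h1 : Fin.rev b ≤ Fin.rev a := Fin.rev_le_rev.2 hab
    exact Tuple.monotone_sort g h1
  -- positivity
  have hlamBpos : ∀ i, 0 < lamB i := fun i => by
    rw [heB]; exact hB.eigenvalues_pos (eB i)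
  have hlamAnn : ∀ i, 0 ≤ lamA i := fun i => by
    rw [heA]; exact hA.eigenvalues_nonneg (eA i)
  have hlamCpos : ∀ i, 0 < lamC i := fun i => hC.eigenvalues_pos (eC i)
  -- the core product inequality
  have hcore : ∏ i, (lamA i + lamB i) ≤ ∏ i, lamC i := by
    set u : ℕ → ℝ := fun i => if h : i < N then lamC ⟨i, h⟩ else 0 with hu
    set v : ℕ → ℝ := fun i => if h : i < N then lamA ⟨i, h⟩ + lamB ⟨i, h⟩ else 0 with hv
    have hmain := maj_prod_le N u v
      (fun i hi => by simp only [hu, dif_pos hi]; exact hlamCpos _)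
      (fun i hi => by
        simp only [hv, dif_pos hi]
        exact add_pos_of_nonneg_of_pos (hlamAnn _) (hlamBpos _))
      (fun i j hij hj => by
        have hi : i < N := lt_of_le_of_lt hij hj
        simp only [hu, dif_pos hi, dif_pos hj]
        exact hlamC (by exact Fin.mk_le_mk.2 hij))
      ?_ ?_
    · calc ∏ i, (lamA i + lamB i)
          = ∏ i ∈ Finset.range N, v i := (prod_fin_ext (fun i => lamA i + lamB i)).symm
        _ ≤ ∏ i ∈ Finset.range N, u i := hmain
        _ = ∏ i, lamC i := prod_fin_ext lamC
    · -- partial sums : Ky Fan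
      intro k hk
      have hus : ∑ i ∈ Finset.range k, u i
          = ∑ i ∈ Finset.univ.filter (fun i : Fin N => (i : ℕ) < k), lamC i :=
        sum_fin_ext k hk lamC
      have hvs : ∑ i ∈ Finset.range k, v i
          = ∑ i ∈ Finset.univ.filter (fun i : Fin N => (i : ℕ) < k), (lamA i + lamB i) :=
        sum_fin_ext k hk (fun i => lamA i + lamB i)
      rw [hus, hvs]
      set U := hC.isHermitian.eigenvectorUnitary with hU
      set s : Finset (Fin N) :=
        (Finset.univ.filter (fun i : Fin N => (i : ℕ) < k)).image eC with hs
      have hscard : s.card = k := by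
        rw [hs, Finset.card_image_of_injective _ eC.injective, card_filter_lt_fin N k hk]
      have hdiag : star (U : Matrix (Fin N) (Fin N) ℂ) * (B + A) * U
          = Matrix.diagonal (Complex.ofReal ∘ g) :=
        by
          have h := hC.isHermitian.conjStarAlgAut_star_eigenvectorUnitary
          rw [Unitary.conjStarAlgAut_apply, Unitary.coe_star, star_star] at h
          exact h
      have hL : ∑ i ∈ Finset.univ.filter (fun i : Fin N => (i : ℕ) < k), lamC i
          = ∑ j ∈ s, ((star (U : Matrix (Fin N) (Fin N) ℂ) * (B + A) * U) j j).re := by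
        rw [hs, Finset.sum_image (fun a _ b _ h => eC.injective h)]
        apply Finset.sum_congr rfl
        intro i _
        rw [hdiag]
        simp only [Matrix.diagonal_apply_eq, Function.comp_apply, Complex.ofReal_re]
        rfl
      have hsplit : ∀ j : Fin N,
          ((star (U : Matrix (Fin N) (Fin N) ℂ) * (B + A) * U) j j).re
          = ((star (U : Matrix (Fin N) (Fin N) ℂ) * A * U) j j).re
            + ((star (U : Matrix (Fin N) (Fin N) ℂ) * B * U) j j).re := by
        intro j
        have : star (U : Matrix (Fin N) (Fin N) ℂ) * (B + A) * U
            = star (U : Matrix (Fin N) (Fin N) ℂ) * A * U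
              + star (U : Matrix (Fin N) (Fin N) ℂ) * B * U := by
          rw [Matrix.mul_add, Matrix.add_mul]; abel
        rw [this]
        simp [Matrix.add_apply]
      have hKA := kyfan hA.isHermitian U s lamA hlamA eA heA
      have hKB := kyfan hB.isHermitian U s lamB hlamB eB heB
      rw [hscard] at hKA hKB
      rw [hL]
      calc ∑ j ∈ s, ((star (U : Matrix (Fin N) (Fin N) ℂ) * (B + A) * U) j j).re
          = ∑ j ∈ s, (((star (U : Matrix (Fin N) (Fin N) ℂ) * A * U) j j).re
            + ((star (U : Matrix (Fin N) (Fin N) ℂ) * B * U) j j).re) :=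
            Finset.sum_congr rfl (fun j _ => hsplit j)
        _ = (∑ j ∈ s, ((star (U : Matrix (Fin N) (Fin N) ℂ) * A * U) j j).re)
            + ∑ j ∈ s, ((star (U : Matrix (Fin N) (Fin N) ℂ) * B * U) j j).re :=
            Finset.sum_add_distrib
        _ ≤ (∑ i ∈ Finset.univ.filter (fun i : Fin N => (i : ℕ) < k), lamA i)
            + ∑ i ∈ Finset.univ.filter (fun i : Fin N => (i : ℕ) < k), lamB i :=
            add_le_add hKA hKB
        _ = ∑ i ∈ Finset.univ.filter (fun i : Fin N => (i : ℕ) < k), (lamA i + lamB i) :=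
            Finset.sum_add_distrib.symm
    · -- total sums equal (traces)
      have hus : ∑ i ∈ Finset.range N, u i
          = ∑ i ∈ Finset.univ.filter (fun i : Fin N => (i : ℕ) < N), lamC i :=
        sum_fin_ext N le_rfl lamC
      have hvs : ∑ i ∈ Finset.range N, v i
          = ∑ i ∈ Finset.univ.filter (fun i : Fin N => (i : ℕ) < N), (lamA i + lamB i) :=
        sum_fin_ext N le_rfl (fun i => lamA i + lamB i)
      rw [hus, hvs, filter_univ_eq]
      have h1 : ∑ i, lamC i = ∑ i, g i := Equiv.sum_comp eC g
      have h2 : ∑ i, lamA i = ∑ i, hA.isHermitian.eigenvalues i := by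
        rw [heA]; exact Equiv.sum_comp eA _
      have h3 : ∑ i, lamB i = ∑ i, hB.isHermitian.eigenvalues i := by
        rw [heB]; exact Equiv.sum_comp eB _
      have htr : Complex.ofReal (∑ i, g i)
          = Complex.ofReal (∑ i, hA.isHermitian.eigenvalues i
            + ∑ i, hB.isHermitian.eigenvalues i) := by
        rw [← trace_hermitian hC.isHermitian, Complex.ofReal_add,
          ← trace_hermitian hA.isHermitian, ← trace_hermitian hB.isHermitian,
          Matrix.trace_add, add_comm]
      have htr' : ∑ i, g i = ∑ i, hA.isHermitian.eigenvalues i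
          + ∑ i, hB.isHermitian.eigenvalues i := Complex.ofReal_inj.1 htr
      rw [h1, htr', ← h2, ← h3, ← Finset.sum_add_distrib]
  -- determinant identities
  have hdetB : B.det = Complex.ofReal (∏ i, lamB i) := by
    rw [det_hermitian hB.isHermitian]
    congr 1
    rw [heB]
    exact (Equiv.prod_comp eB _).symm
  have hdetC : (B + A).det = Complex.ofReal (∏ i, lamC i) := by
    rw [det_hermitian hC.isHermitian]
    congr 1
    exact (Equiv.prod_comp eC g).symm
  have hprodBpos : (0:ℝ) < ∏ i, lamB i := Finset.prod_pos (fun i _ => hlamBpos i)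
  have hdetBne : B.det ≠ 0 := by
    rw [hdetB]
    exact_mod_cast hprodBpos.ne'
  have hkey : (1 : Matrix (Fin N) (Fin N) ℂ) + A * B⁻¹ = (B + A) * B⁻¹ := by
    rw [Matrix.add_mul, Matrix.mul_nonsing_inv B (Ne.isUnit hdetBne)]
  have hdet : ((1 : Matrix (Fin N) (Fin N) ℂ) + A * B⁻¹).det
      = Complex.ofReal ((∏ i, lamC i) / ∏ i, lamB i) := by
    rw [hkey, Matrix.det_mul, Matrix.det_nonsing_inv, Ring.inverse_eq_inv', hdetC, hdetB]
    rw [div_eq_mul_inv, Complex.ofReal_mul, Complex.ofReal_inv]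
  refine ⟨?_, ?_, ?_⟩
  · rw [hdet, Complex.ofReal_re]
    have heq : ∏ i, (1 + lamA i / lamB i) = (∏ i, (lamA i + lamB i)) / ∏ i, lamB i := by
      rw [← Finset.prod_div_distrib]
      apply Finset.prod_congr rfl
      intro i _
      rw [add_div, div_self (hlamBpos i).ne', add_comm]
    rw [heq]
    exact div_le_div_of_nonneg_right hcore hprodBpos.le
  · rw [hdet, Complex.ofReal_im]
  · rw [hdet, hdetC, hdetB, Complex.ofReal_div]
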